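/- For every natural number n and every λ ≥ 0, the set function A ↦ g(n,λ,A) on the power set of ℕ is countably additive with total mass zero: g(n,λ,∅) = 0; for every sequence (A_k)_{k∈ℕ} of pairwise disjoint subsets of ℕ the family (g(n,λ,A_k))_{k∈ℕ} is summable and Σ_{k} g(n,λ,A_k) = g(n,λ,⋃_k A_k); and g(n,λ,ℕ) = 0. -/

import Mathlib

open scoped BigOperators

/-- Poisson pmf: Po(k;lam) = lam^k * e^(-lam) / k!  (with the convention 0^0 = 1). -/
noncomputable def Po (k : ℕ) (lam : ℝ) : ℝ := lam ^ k * Real.exp (-lam) / (Nat.factorial k)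

/-- Poisson measure of a set A of naturals: Po(A;lam) = sum over k in A of Po(k;lam). -/
noncomputable def PoSet (A : Set ℕ) (lam : ℝ) : ℝ := ∑' k : A, Po k lam

/-- The scalar Stein-Chen solution g(j,lam,A), defined recursively by g(0,lam,A) = 0 and
g(j,lam,A) = lam⁻¹ * ((j-1)*g(j-1,lam,A) + 1_A(j-1) - Po(A;lam))
             + (1/j) * 1_{lam=0} * (1_A(0) - 1_A(j)) for j ≥ 1,
with the convention 0⁻¹ = 0. -/
noncomputable def steinChen : ℕ → ℝ → Set ℕ → ℝ
  | 0, _, _ => 0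
  | (j + 1), lam, A =>
      lam⁻¹ * ((j : ℝ) * steinChen j lam A
          + A.indicator (fun _ => (1 : ℝ)) j - PoSet A lam)
        + (1 / ((j : ℝ) + 1)) * (if lam = 0 then (1 : ℝ) else 0)
          * (A.indicator (fun _ => (1 : ℝ)) 0 - A.indicator (fun _ => (1 : ℝ)) (j + 1))

/-- Pointwise density of the Stein-Chen set function. -/
noncomputable def steinChenPt : ℕ → ℝ → ℕ → ℝ
  | 0, _, _ => 0
  | (j + 1), lam, m =>
      lam⁻¹ * ((j : ℝ) * steinChenPt j lam m
          + (if m = j then (1 : ℝ) else 0) - Po m lam)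
        + (1 / ((j : ℝ) + 1)) * (if lam = 0 then (1 : ℝ) else 0)
          * ((if m = 0 then (1 : ℝ) else 0) - (if m = j + 1 then (1 : ℝ) else 0))

lemma summable_Po (lam : ℝ) : Summable (fun k => Po k lam) := by
  have h : (fun k => Po k lam) = fun k => (lam ^ k / (Nat.factorial k)) * Real.exp (-lam) := by
    funext k; simp [Po]; ring
  rw [h]
  exact (Real.summable_pow_div_factorial lam).mul_right _

lemma hasSum_Po (lam : ℝ) : HasSum (fun k => Po k lam) 1 := by
  have h : (fun k => Po k lam) = fun k => (lam ^ k / (Nat.factorial k)) * Real.exp (-lam) := by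
    funext k; simp [Po]; ring
  rw [h]
  have := (NormedSpace.expSeries_div_hasSum_exp lam).mul_right (Real.exp (-lam))
  rw [← Real.exp_eq_exp_ℝ] at this
  simpa [← Real.exp_add] using this

lemma hasSum_ind (A : Set ℕ) (i : ℕ) :
    HasSum (fun m : A => (if (m : ℕ) = i then (1 : ℝ) else 0))
      (A.indicator (fun _ => (1 : ℝ)) i) := by
  by_cases hi : i ∈ A
  · have : (fun m : A => (if (m : ℕ) = i then (1 : ℝ) else 0))
        = fun m : A => (if m = (⟨i, hi⟩ : A) then (1 : ℝ) else 0) := by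
      funext m; simp [Subtype.ext_iff]
    rw [this, Set.indicator_of_mem hi]
    exact hasSum_ite_eq (⟨i, hi⟩ : A) (1 : ℝ)
  · have : (fun m : A => (if (m : ℕ) = i then (1 : ℝ) else 0)) = fun _ : A => (0 : ℝ) := by
      funext m
      have : (m : ℕ) ≠ i := fun h => hi (h ▸ m.2)
      simp [this]
    rw [this, Set.indicator_of_notMem hi]
    exact hasSum_zero

/-- Key lemma: g(n,lam,A) is the sum over A of the pointwise density. -/
lemma steinChen_hasSum (n : ℕ) (lam : ℝ) (A : Set ℕ) :
    HasSum (fun m : A => steinChenPt n lam m) (steinChen n lam A) := by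
  induction n with
  | zero => simpa [steinChenPt, steinChen] using (hasSum_zero : HasSum (fun _ : A => (0:ℝ)) 0)
  | succ j ih =>
    have hPo : HasSum (fun m : A => Po m lam) (PoSet A lam) :=
      ((summable_Po lam).subtype A).hasSum
    have h1 := (((ih.mul_left (j : ℝ)).add (hasSum_ind A j)).sub hPo).mul_left lam⁻¹
    have h2 := (((hasSum_ind A 0).sub (hasSum_ind A (j + 1))).mul_left
      ((1 / ((j : ℝ) + 1)) * (if lam = 0 then (1 : ℝ) else 0)))
    have := h1.add h2
    simpa [steinChenPt, steinChen, mul_assoc] using this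

lemma steinChen_empty (n : ℕ) (lam : ℝ) : steinChen n lam (∅ : Set ℕ) = 0 :=
  (steinChen_hasSum n lam ∅).unique hasSum_empty

lemma PoSet_univ (lam : ℝ) : PoSet Set.univ lam = 1 := by
  have := (hasSum_Po lam)
  rw [PoSet, tsum_univ (fun k => Po k lam)]
  exact this.tsum_eq

lemma steinChen_univ (n : ℕ) (lam : ℝ) : steinChen n lam (Set.univ : Set ℕ) = 0 := by
  induction n with
  | zero => rfl
  | succ j ih => simp [steinChen, ih, PoSet_univ]

theorem steinChen_countably_additive (n : ℕ) (lam : ℝ) (hlam : 0 ≤ lam) :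
    steinChen n lam (∅ : Set ℕ) = 0 ∧
    (∀ A : ℕ → Set ℕ, Pairwise (Function.onFun Disjoint A) →
      HasSum (fun k => steinChen n lam (A k)) (steinChen n lam (⋃ k, A k))) ∧
    steinChen n lam (Set.univ : Set ℕ) = 0 := by
  refine ⟨steinChen_empty n lam, ?_, steinChen_univ n lam⟩
  intro A hA
  have hU : HasSum (fun m : (⋃ k, A k) => steinChenPt n lam m)
      (steinChen n lam (⋃ k, A k)) := steinChen_hasSum n lam _
  have hsig : HasSum (fun s : Σ k, A k => steinChenPt n lam (s.2 : ℕ))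
      (steinChen n lam (⋃ k, A k)) := by
    have := (Equiv.hasSum_iff (Set.unionEqSigmaOfDisjoint hA).symm).mpr hU
    convert this using 1
    funext s; rfl
  exact hsig.sigma fun k => steinChen_hasSum n lam (A k)
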